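/- AIL objective decomposition (core identity in the proof of Theorem 1): For every belief-conditional policy π : B → pmf(A), the equality ∑_{(s,b)∈S×B} d(s,b)·KL(π_θ(·|s) ‖ π(·|b)) = ∑_{b∈B} d(b)·KL(π̂(·|b) ‖ π(·|b)) + C holds in [0,+∞], where the finite constant C = ∑_{(s,b)∈S×B} d(s,b)·∑_{a∈A} π_θ(a|s)·log π_θ(a|s) − ∑_{b∈B} d(b)·∑_{a∈A} π̂(a|b)·log π̂(a|b) (with the convention 0·log 0 = 0) does not depend on π. -/

import Mathlib

open scoped BigOperators ENNReal Classical

noncomputable section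

/-- A probability mass function on a finite type. -/
def IsPmf {X : Type*} [Fintype X] (p : X → ℝ) : Prop :=
  (∀ x, 0 ≤ p x) ∧ ∑ x, p x = 1

/-- Kullback–Leibler divergence between two pmfs on a finite type, valued in `[0, ∞]`,
with the conventions `0 * log (0 / q a) = 0` and `KL(p‖q) = ∞` whenever
`p a > 0 = q a` for some `a`. -/
def klDiv {A : Type*} [Fintype A] (p q : A → ℝ) : ℝ≥0∞ :=
  if ∀ a, q a = 0 → p a = 0 then ENNReal.ofReal (∑ a, p a * Real.log (p a / q a)) else ⊤

/-- Gibbs' inequality. -/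
lemma gibbs {A : Type*} [Fintype A] (p q : A → ℝ) (hp : IsPmf p)
    (hq0 : ∀ a, 0 ≤ q a) (hq1 : ∑ a, q a ≤ 1)
    (h : ∀ a, q a = 0 → p a = 0) :
    0 ≤ ∑ a, p a * Real.log (p a / q a) := by
  have key : ∀ a, p a - q a ≤ p a * Real.log (p a / q a) := by
    intro a
    by_cases hpa : p a = 0
    · simp [hpa]; exact hq0 a
    · have hppos : 0 < p a := lt_of_le_of_ne (hp.1 a) (Ne.symm hpa)
      have hqpos : 0 < q a := by
        rcases lt_or_eq_of_le (hq0 a) with h' | h'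
        · exact h'
        · exact absurd (h a h'.symm) hpa
      have h1 : Real.log (q a / p a) ≤ q a / p a - 1 :=
        Real.log_le_sub_one_of_pos (div_pos hqpos hppos)
      have h2 : Real.log (p a / q a) = - Real.log (q a / p a) := by
        rw [Real.log_div hpa hqpos.ne', Real.log_div hqpos.ne' hpa]; ring
      rw [h2]
      have h3 : p a * (q a / p a) = q a := by field_simp
      nlinarith [mul_le_mul_of_nonneg_left h1 (hp.1 a)]
  calc (0:ℝ) = ∑ a, p a - ∑ a, q a + (∑ a, q a - 1) := by rw [hp.2]; ring
    _ ≤ ∑ a, p a - ∑ a, q a := by linarith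
    _ = ∑ a, (p a - q a) := (Finset.sum_sub_distrib _ _).symm
    _ ≤ ∑ a, p a * Real.log (p a / q a) := Finset.sum_le_sum fun a _ => key a

theorem ail_objective_decomposition
    {S B A : Type*} [Fintype S] [Fintype B] [Fintype A]
    [Nonempty S] [Nonempty B] [Nonempty A]
    (d : S × B → ℝ) (hd : IsPmf d)
    (πθ : S → A → ℝ) (hπθ : ∀ s, IsPmf (πθ s))
    (dB : B → ℝ) (hdB : ∀ b, dB b = ∑ s, d (s, b))
    (πhat : B → A → ℝ)
    (hπhat_pos : ∀ b, 0 < dB b → ∀ a, πhat b a = ∑ s, d (s, b) / dB b * πθ s a)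
    (hπhat_zero : ∀ b, dB b = 0 → ∀ a, πhat b a = 1 / (Fintype.card A : ℝ))
    (C : ℝ)
    (hC : C = (∑ x : S × B, d x * ∑ a, πθ x.1 a * Real.log (πθ x.1 a))
        - ∑ b, dB b * ∑ a, πhat b a * Real.log (πhat b a)) :
    ∀ π : B → A → ℝ, (∀ b, IsPmf (π b)) →
      ((∑ x : S × B, ENNReal.ofReal (d x) * klDiv (πθ x.1) (π x.2) : ℝ≥0∞) : EReal)
        = ((∑ b, ENNReal.ofReal (dB b) * klDiv (πhat b) (π b) : ℝ≥0∞) : EReal)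
          + (C : EReal) := by
  intro π hπ
  have hd0 : ∀ x, 0 ≤ d x := hd.1
  have hdB0 : ∀ b, 0 ≤ dB b := by
    intro b; rw [hdB b]; exact Finset.sum_nonneg fun s _ => hd0 (s, b)
  have hdzero : ∀ b, dB b = 0 → ∀ s, d (s, b) = 0 := by
    intro b hb s
    have := (Finset.sum_eq_zero_iff_of_nonneg (fun s _ => hd0 (s, b))).mp
      ((hdB b).symm.trans hb)
    exact this s (Finset.mem_univ s)
  have hπhat_pmf : ∀ b, IsPmf (πhat b) := by
    intro b
    by_cases hb : dB b = 0
    · constructor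
      · intro a; rw [hπhat_zero b hb a]; positivity
      · have hcard : (0:ℝ) < Fintype.card A := by
          exact_mod_cast Fintype.card_pos
        simp only [hπhat_zero b hb]
        rw [Finset.sum_const, Finset.card_univ, nsmul_eq_mul]
        field_simp
    · have hbpos : 0 < dB b := lt_of_le_of_ne (hdB0 b) (Ne.symm hb)
      constructor
      · intro a; rw [hπhat_pos b hbpos a]
        exact Finset.sum_nonneg fun s _ =>
          mul_nonneg (div_nonneg (hd0 (s, b)) (hdB0 b)) ((hπθ s).1 a)
      · simp only [hπhat_pos b hbpos]
        rw [Finset.sum_comm]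
        have : ∀ s, ∑ a, d (s, b) / dB b * πθ s a = d (s, b) / dB b := by
          intro s; rw [← Finset.mul_sum, (hπθ s).2, mul_one]
        rw [Finset.sum_congr rfl fun s _ => this s, ← Finset.sum_div, ← hdB b]
        field_simp
  by_cases hcase : ∀ x : S × B, 0 < d x → ∀ a, π x.2 a = 0 → πθ x.1 a = 0
  · -- finite case
    have hfin : ∀ b, 0 < dB b → ∀ a, π b a = 0 → πhat b a = 0 := by
      intro b hb a ha
      rw [hπhat_pos b hb a]
      apply Finset.sum_eq_zero
      intro s _
      by_cases hs : d (s, b) = 0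
      · simp [hs]
      · have : 0 < d (s, b) := lt_of_le_of_ne (hd0 (s, b)) (Ne.symm hs)
        rw [hcase (s, b) this a ha, mul_zero]
    set Kθ : S × B → ℝ := fun x => ∑ a, πθ x.1 a * Real.log (πθ x.1 a / π x.2 a) with hKθ
    set Kh : B → ℝ := fun b => ∑ a, πhat b a * Real.log (πhat b a / π b a) with hKh
    have hKθ0 : ∀ x, 0 < d x → 0 ≤ Kθ x := fun x hx =>
      gibbs _ _ (hπθ x.1) ((hπ x.2).1) (le_of_eq (hπ x.2).2) (hcase x hx)
    have hKh0 : ∀ b, 0 < dB b → 0 ≤ Kh b := fun b hb =>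
      gibbs _ _ (hπhat_pmf b) ((hπ b).1) (le_of_eq (hπ b).2) (hfin b hb)
    have tθ0 : ∀ x : S × B, 0 ≤ d x * Kθ x := by
      intro x
      by_cases hx : d x = 0
      · simp [hx]
      · exact mul_nonneg (hd0 x) (hKθ0 x (lt_of_le_of_ne (hd0 x) (Ne.symm hx)))
    have th0 : ∀ b, 0 ≤ dB b * Kh b := by
      intro b
      by_cases hb : dB b = 0
      · simp [hb]
      · exact mul_nonneg (hdB0 b) (hKh0 b (lt_of_le_of_ne (hdB0 b) (Ne.symm hb)))
    have step1 : (∑ x : S × B, ENNReal.ofReal (d x) * klDiv (πθ x.1) (π x.2))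
        = ENNReal.ofReal (∑ x : S × B, d x * Kθ x) := by
      rw [ENNReal.ofReal_sum_of_nonneg fun x _ => tθ0 x]
      apply Finset.sum_congr rfl
      intro x _
      by_cases hx : d x = 0
      · simp [hx]
      · have hxpos : 0 < d x := lt_of_le_of_ne (hd0 x) (Ne.symm hx)
        rw [klDiv, if_pos (hcase x hxpos), ← ENNReal.ofReal_mul (hd0 x)]
    have step2 : (∑ b, ENNReal.ofReal (dB b) * klDiv (πhat b) (π b))
        = ENNReal.ofReal (∑ b, dB b * Kh b) := by
      rw [ENNReal.ofReal_sum_of_nonneg fun b _ => th0 b]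
      apply Finset.sum_congr rfl
      intro b _
      by_cases hb : dB b = 0
      · simp [hb]
      · have hbpos : 0 < dB b := lt_of_le_of_ne (hdB0 b) (Ne.symm hb)
        rw [klDiv, if_pos (hfin b hbpos), ← ENNReal.ofReal_mul (hdB0 b)]
    rw [step1, step2, EReal.coe_ennreal_ofReal, EReal.coe_ennreal_ofReal,
      max_eq_left (Finset.sum_nonneg fun x _ => tθ0 x),
      max_eq_left (Finset.sum_nonneg fun b _ => th0 b), ← EReal.coe_add,
      EReal.coe_eq_coe_iff]
    -- real identity
    have splitθ : ∑ x : S × B, d x * Kθ x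
        = (∑ x : S × B, d x * ∑ a, πθ x.1 a * Real.log (πθ x.1 a))
          - ∑ x : S × B, d x * ∑ a, πθ x.1 a * Real.log (π x.2 a) := by
      rw [← Finset.sum_sub_distrib]
      apply Finset.sum_congr rfl
      intro x _
      by_cases hx : d x = 0
      · simp [hx]
      · have hxpos : 0 < d x := lt_of_le_of_ne (hd0 x) (Ne.symm hx)
        rw [← mul_sub, ← Finset.sum_sub_distrib]
        congr 1
        apply Finset.sum_congr rfl
        intro a _
        by_cases hpa : πθ x.1 a = 0
        · simp [hpa]
        · have hqa : π x.2 a ≠ 0 := fun h => hpa (hcase x hxpos a h)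
          rw [Real.log_div hpa hqa]; ring
    have splith : ∑ b, dB b * Kh b
        = (∑ b, dB b * ∑ a, πhat b a * Real.log (πhat b a))
          - ∑ b, dB b * ∑ a, πhat b a * Real.log (π b a) := by
      rw [← Finset.sum_sub_distrib]
      apply Finset.sum_congr rfl
      intro b _
      by_cases hb : dB b = 0
      · simp [hb]
      · have hbpos : 0 < dB b := lt_of_le_of_ne (hdB0 b) (Ne.symm hb)
        rw [← mul_sub, ← Finset.sum_sub_distrib]
        congr 1
        apply Finset.sum_congr rfl
        intro a _
        by_cases hpa : πhat b a = 0
        · simp [hpa]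
        · have hqa : π b a ≠ 0 := fun h => hpa (hfin b hbpos a h)
          rw [Real.log_div hpa hqa]; ring
    have cross : ∑ x : S × B, d x * ∑ a, πθ x.1 a * Real.log (π x.2 a)
        = ∑ b, dB b * ∑ a, πhat b a * Real.log (π b a) := by
      rw [Fintype.sum_prod_type_right]
      apply Finset.sum_congr rfl
      intro b _
      by_cases hb : dB b = 0
      · simp [hb, hdzero b hb]
      · have hbpos : 0 < dB b := lt_of_le_of_ne (hdB0 b) (Ne.symm hb)
        simp only [hπhat_pos b hbpos]
        rw [Finset.mul_sum]
        rw [show (∑ s, d (s, b) * ∑ a, πθ s a * Real.log (π b a))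
            = ∑ s, ∑ a, d (s, b) * πθ s a * Real.log (π b a) by
          apply Finset.sum_congr rfl; intro s _; rw [Finset.mul_sum]
          apply Finset.sum_congr rfl; intro a _; ring]
        rw [Finset.sum_comm]
        apply Finset.sum_congr rfl
        intro a _
        rw [Finset.sum_mul, Finset.mul_sum]
        apply Finset.sum_congr rfl
        intro s _
        field_simp
    rw [splitθ, splith, cross, hC]
    ring
  · -- infinite case
    push_neg at hcase
    obtain ⟨x, hxpos, a, hqa, hpa⟩ := hcase
    have hpa' : 0 < πθ x.1 a := lt_of_le_of_ne ((hπθ x.1).1 a) (Ne.symm hpa)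
    have hLtop : (∑ x : S × B, ENNReal.ofReal (d x) * klDiv (πθ x.1) (π x.2)) = ⊤ := by
      rw [ENNReal.sum_eq_top]
      refine ⟨x, Finset.mem_univ x, ?_⟩
      rw [klDiv, if_neg (by push_neg; exact ⟨a, hqa, hpa⟩)]
      rw [ENNReal.mul_top]
      exact (ENNReal.ofReal_pos.mpr hxpos).ne'
    have hbpos : 0 < dB x.2 := by
      rw [hdB x.2]
      have : d (x.1, x.2) ≤ ∑ s, d (s, x.2) :=
        Finset.single_le_sum (fun s _ => hd0 (s, x.2)) (Finset.mem_univ x.1)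
      simpa using lt_of_lt_of_le hxpos this
    have hhatpos : 0 < πhat x.2 a := by
      rw [hπhat_pos x.2 hbpos a]
      apply Finset.sum_pos' (fun s _ =>
        mul_nonneg (div_nonneg (hd0 (s, x.2)) (hdB0 x.2)) ((hπθ s).1 a))
      exact ⟨x.1, Finset.mem_univ x.1,
        mul_pos (div_pos (by simpa using hxpos) hbpos) hpa'⟩
    have hRtop : (∑ b, ENNReal.ofReal (dB b) * klDiv (πhat b) (π b)) = ⊤ := by
      rw [ENNReal.sum_eq_top]
      refine ⟨x.2, Finset.mem_univ x.2, ?_⟩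
      rw [klDiv, if_neg (by push_neg; exact ⟨a, hqa, hhatpos.ne'⟩)]
      rw [ENNReal.mul_top]
      exact (ENNReal.ofReal_pos.mpr hbpos).ne'
    rw [hLtop, hRtop]
    simp [EReal.top_add_coe]
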